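/- Let (F,M) be a valid partition with k colors of a finite simple graph G = (V,E), and let H = (V,M) be its surplus graph with M = M₁ ∪ … ∪ M_k. Let C = (V_C, E_C) be a connected component of H that contains a cycle and is colorful, i.e., each M_i contains at most one edge of E_C. Then for every vertex v ∈ V_C there is a color i such that E_C contains an edge of M_i and no edge of F_i joins v to a vertex of V_C. -/

import Mathlib

open SimpleGraph

/-- An edge set spans a forest if the graph it spans contains no cycle. -/
def IsForestSet {V : Type*} (F : Set (Sym2 V)) : Prop :=
  (SimpleGraph.fromEdgeSet F).IsAcyclic

/-- A set of edges is a matching if no two of its edges share an endpoint. -/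
def IsMatchingSet {V : Type*} (M : Set (Sym2 V)) : Prop :=
  ∀ e ∈ M, ∀ f ∈ M, e ≠ f → ∀ v : V, v ∈ e → v ∉ f

/-- A valid partition of `G` with `k` colors: pairwise disjoint edge sets
`F 1, …, F k, M 1, …, M k` covering the edges of `G`, where each `F i` is a forest,
each `M i` is a matching, every edge of `M i` has both endpoints in the same connected
component of `(V, F i)`, and no two distinct edges of `M i` have their endpoints in the
same connected component of `(V, F i)`. -/
def IsValidPartition {V : Type*} (G : SimpleGraph V) (k : ℕ)
    (F M : Fin k → Set (Sym2 V)) : Prop :=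
  (∀ i, IsForestSet (F i)) ∧
  (∀ i, IsMatchingSet (M i)) ∧
  (Pairwise fun i j => Disjoint (F i) (F j)) ∧
  (Pairwise fun i j => Disjoint (M i) (M j)) ∧
  (∀ i j, Disjoint (F i) (M j)) ∧
  ((⋃ i, F i) ∪ (⋃ i, M i)) = G.edgeSet ∧
  (∀ (i : Fin k) (u v : V), s(u, v) ∈ M i →
    (SimpleGraph.fromEdgeSet (F i)).Reachable u v) ∧
  (∀ i : Fin k, ∀ e ∈ M i, ∀ f ∈ M i, e ≠ f → ∀ u v : V, u ∈ e → v ∈ f →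
    ¬ (SimpleGraph.fromEdgeSet (F i)).Reachable u v)

/-- Let `C` be a connected component (the component of the vertex `w₀`) of the surplus
graph `H` of a valid partition. If `C` contains a cycle and is colorful (each `M i`
contains at most one edge of `C`), then for every vertex `v` of `C` there is a color `i`
such that `C` contains an edge of `M i` and no edge of `F i` joins `v` to a vertex
of `C`. -/

private lemma reach_mono' {V : Type*} {G G' : SimpleGraph V}
    (h : ∀ x y, G.Adj x y → G'.Reachable x y) {a b : V} (r : G.Reachable a b) :
    G'.Reachable a b := by
  obtain ⟨p⟩ := r
  induction p with
  | nil => exact Reachable.refl _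
  | cons ha _ ih => exact (h _ _ ha).trans ih

private lemma walk_support_mem' {V : Type*} {G : SimpleGraph V} {S : Set V}
    (hS : ∀ x ∈ S, ∀ y, G.Adj x y → y ∈ S) {a b : V} (p : G.Walk a b) (ha : a ∈ S) :
    ∀ x ∈ p.support, x ∈ S := by
  induction p with
  | nil => intro x hx; rw [Walk.support_nil, List.mem_singleton] at hx; rwa [hx]
  | cons h q ih =>
    intro x hx
    rw [Walk.support_cons] at hx
    rcases List.mem_cons.1 hx with rfl | hx
    · exact ha
    · exact ih (hS _ ha _ h) x hx

private lemma induce_connected_comp' {V : Type*} {G : SimpleGraph V} {S : Set V} {w₀ : V}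
    (hw : w₀ ∈ S) (hS : ∀ x ∈ S, ∀ y, G.Adj x y → y ∈ S)
    (hreach : ∀ v ∈ S, G.Reachable w₀ v) : (G.induce S).Connected := by
  apply induce_connected_of_patches w₀ hw
  intro v hv
  obtain ⟨p⟩ := hreach v hv
  exact ⟨{x | x ∈ p.support}, fun x hx => walk_support_mem' hS p hw x hx,
    p.start_mem_support, p.end_mem_support,
    (p.connected_induce_support).preconnected _ _⟩

private lemma connected_delete_cycle_edge' {V : Type*} {G : SimpleGraph V} (hc : G.Connected)
    {u a b : V} (c : G.Walk u u) (hcyc : c.IsCycle) (he : s(a, b) ∈ c.edges) :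
    (G \ fromEdgeSet {s(a, b)}).Connected := by
  have hr : (G \ fromEdgeSet {s(a, b)}).Reachable a b :=
    (adj_and_reachable_delete_edges_iff_exists_cycle.2 ⟨u, c, hcyc, he⟩).2
  have key : ∀ x y, G.Adj x y → (G \ fromEdgeSet {s(a, b)}).Reachable x y := by
    intro x y hxy
    by_cases hxy' : s(x, y) = s(a, b)
    · rcases Sym2.eq_iff.1 hxy' with ⟨rfl, rfl⟩ | ⟨rfl, rfl⟩
      · exact hr
      · exact hr.symm
    · exact Adj.reachable (by simp [sdiff_adj, fromEdgeSet_adj, hxy, hxy'])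
  have : Nonempty V := hc.nonempty
  exact Connected.mk (fun x y => reach_mono' key (hc.preconnected x y))

private lemma edgeSet_sdiff_singleton' {V : Type*} {G : SimpleGraph V} {a b : V}
    (hab : G.Adj a b) :
    (G \ fromEdgeSet {s(a, b)}).edgeSet = G.edgeSet \ {s(a, b)} := by
  simp [edgeSet_sdiff, edgeSet_fromEdgeSet, edgeSet_sdiff_sdiff_isDiag]

private lemma connected_card_le' {W : Type*} [Fintype W] :
    ∀ (n : ℕ) (G : SimpleGraph W), G.edgeSet.ncard ≤ n → G.Connected →
      Fintype.card W ≤ G.edgeSet.ncard + 1 := by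
  intro n
  induction n with
  | zero =>
    intro G hn hc
    have hac : G.IsAcyclic := by
      intro x p hp
      have h3 := hp.three_le_length
      have : p.edges ≠ [] := by
        intro h
        have := p.length_edges
        rw [h] at this
        simp at this
        omega
      obtain ⟨e, he⟩ := List.exists_mem_of_ne_nil _ this
      have heG : e ∈ G.edgeSet := p.edges_subset_edgeSet he
      have : G.edgeSet.ncard = 0 := Nat.le_zero.1 hn
      rw [Set.ncard_eq_zero (Set.toFinite _)] at this
      rw [this] at heG
      exact heG
    classical
    have ht : G.IsTree := ⟨hc, hac⟩
    have := ht.card_edgeFinset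
    have h2 : G.edgeSet.ncard = G.edgeFinset.card := by
      simp [Set.ncard_eq_toFinset_card', edgeFinset]
    omega
  | succ n ih =>
    intro G hn hc
    classical
    by_cases hac : G.IsAcyclic
    · have ht : G.IsTree := ⟨hc, hac⟩
      have := ht.card_edgeFinset
      have h2 : G.edgeSet.ncard = G.edgeFinset.card := by
        simp [Set.ncard_eq_toFinset_card', edgeFinset]
      omega
    · rw [IsAcyclic] at hac
      push_neg at hac
      obtain ⟨u, c, hcyc⟩ := hac
      have h3 := hcyc.three_le_length
      have hne : c.edges ≠ [] := by
        intro h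
        have := c.length_edges
        rw [h] at this
        simp at this
        omega
      obtain ⟨e, he⟩ := List.exists_mem_of_ne_nil _ hne
      induction e using Sym2.ind with
      | _ a b =>
        have hab : G.Adj a b := c.adj_of_mem_edges he
        have heG : s(a, b) ∈ G.edgeSet := hab
        set G' := G \ fromEdgeSet {s(a, b)} with hG'
        have hc' : G'.Connected := connected_delete_cycle_edge' hc c hcyc he
        have hE' : G'.edgeSet = G.edgeSet \ {s(a, b)} := edgeSet_sdiff_singleton' hab
        have hcard : G'.edgeSet.ncard = G.edgeSet.ncard - 1 := by
          rw [hE']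
          exact Set.ncard_diff_singleton_of_mem heG
        have hpos : 0 < G.edgeSet.ncard :=
          (Set.ncard_pos (Set.toFinite _)).2 ⟨_, heG⟩
        have := ih G' (by omega) hc'
        omega

theorem colorful_cyclic_component_has_free_color {V : Type*} [Fintype V] [DecidableEq V]
    (G : SimpleGraph V) (k : ℕ) (F M : Fin k → Set (Sym2 V))
    (hFM : IsValidPartition G k F M) (H : SimpleGraph V)
    (hH : H = SimpleGraph.fromEdgeSet (⋃ i, M i)) (w₀ : V)
    (hcyc : ∃ (u : V) (c : H.Walk u u), c.IsCycle ∧ H.Reachable u w₀)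
    (hcolorful : ∀ i : Fin k, ∀ e ∈ M i, ∀ f ∈ M i,
      (∀ x ∈ e, H.Reachable x w₀) → (∀ x ∈ f, H.Reachable x w₀) → e = f)
    (v : V) (hv : H.Reachable v w₀) :
    ∃ i : Fin k, (∃ e ∈ M i, ∀ x ∈ e, H.Reachable x w₀) ∧
      ∀ u : V, H.Reachable u w₀ → s(v, u) ∉ F i := by
  classical
  obtain ⟨hF1, hM1, hFdisj, hMdisj, hFMdisj, hunion, hMcomp, hMsep⟩ := hFM
  obtain ⟨u, c, hcyc, hu⟩ := hcyc
  set S : Set V := {x | H.Reachable x w₀} with hSdef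
  have hvS : v ∈ S := hv
  have hwS : w₀ ∈ S := Reachable.refl w₀
  have huS : u ∈ S := hu
  have hclosed : ∀ x ∈ S, ∀ y, H.Adj x y → y ∈ S := fun x hx y hxy =>
    (hxy.symm.reachable.trans hx)
  have hFsub : ∀ i, F i ⊆ G.edgeSet := by
    intro i e he
    rw [← hunion]
    exact Or.inl (Set.mem_iUnion.2 ⟨i, he⟩)
  have hHsub : H.edgeSet ⊆ ⋃ i, M i := by
    rw [hH, edgeSet_fromEdgeSet]
    exact Set.diff_subset
  -- a cycle edge
  have h3 := hcyc.three_le_length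
  have hne : c.edges ≠ [] := by
    intro h
    have := c.length_edges
    rw [h] at this
    simp at this
    omega
  obtain ⟨e₀, he₀⟩ := List.exists_mem_of_ne_nil _ hne
  induction e₀ using Sym2.ind with
  | _ a b =>
  have hab : H.Adj a b := c.adj_of_mem_edges he₀
  have haS : a ∈ S := walk_support_mem' hclosed c huS a (c.fst_mem_support_of_mem_edges he₀)
  have hbS : b ∈ S := walk_support_mem' hclosed c huS b (c.snd_mem_support_of_mem_edges he₀)
  have hknz : Nonempty (Fin k) := by
    obtain ⟨i₀, hi₀⟩ := Set.mem_iUnion.1 (hHsub (c.edges_subset_edgeSet he₀))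
    exact ⟨i₀⟩
  -- delete the cycle edge; component stays connected
  set H' : SimpleGraph V := H \ fromEdgeSet {s(a, b)} with hH'def
  have hr : H'.Reachable a b :=
    (adj_and_reachable_delete_edges_iff_exists_cycle.2 ⟨u, c, hcyc, he₀⟩).2
  have key : ∀ x y, H.Adj x y → H'.Reachable x y := by
    intro x y hxy
    by_cases hxy' : s(x, y) = s(a, b)
    · rcases Sym2.eq_iff.1 hxy' with ⟨rfl, rfl⟩ | ⟨rfl, rfl⟩
      · exact hr
      · exact hr.symm
    · exact Adj.reachable (by simp [hH'def, sdiff_adj, fromEdgeSet_adj, hxy, hxy'])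
  have hclosed' : ∀ x ∈ S, ∀ y, H'.Adj x y → y ∈ S := fun x hx y hxy =>
    hclosed x hx y hxy.1
  have hreach' : ∀ x ∈ S, H'.Reachable w₀ x := fun x hx =>
    reach_mono' key hx.symm
  have hconn' : (H'.induce S).Connected := induce_connected_comp' hwS hclosed' hreach'
  haveI : Fintype ↥S := S.toFinite.fintype
  -- edge counting
  have heAdj : (H.induce S).Adj ⟨a, haS⟩ ⟨b, hbS⟩ := by simpa using hab
  have hgr : H'.induce S = (H.induce S) \ fromEdgeSet {s((⟨a, haS⟩ : S), (⟨b, hbS⟩ : S))} := by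
    ext x y
    simp only [hH'def, comap_adj, Function.Embedding.coe_subtype, sdiff_adj, fromEdgeSet_adj,
      Set.mem_singleton_iff, Sym2.eq_iff, Subtype.ext_iff, ne_eq]
  have hEeq : (H'.induce S).edgeSet
      = (H.induce S).edgeSet \ {s((⟨a, haS⟩ : S), (⟨b, hbS⟩ : S))} := by
    rw [hgr]
    exact edgeSet_sdiff_singleton' heAdj
  have heMem : s((⟨a, haS⟩ : S), (⟨b, hbS⟩ : S)) ∈ (H.induce S).edgeSet := heAdj
  have hcard' : (H'.induce S).edgeSet.ncard = (H.induce S).edgeSet.ncard - 1 := by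
    rw [hEeq]
    exact Set.ncard_diff_singleton_of_mem heMem
  have hEApos : 0 < (H.induce S).edgeSet.ncard :=
    (Set.ncard_pos (Set.toFinite _)).2 ⟨_, heMem⟩
  have hmain := connected_card_le' _ (H'.induce S) (le_refl _) hconn'
  have hSn : S.ncard = Fintype.card ↥S := by
    rw [Set.ncard_eq_toFinset_card', Set.toFinset_card]
  have hcount : S.ncard ≤ (H.induce S).edgeSet.ncard := by omega
  -- colors of component edges
  have hexcol : ∀ e ∈ (H.induce S).edgeSet, ∃ i, Sym2.map Subtype.val e ∈ M i := by
    intro e he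
    induction e using Sym2.ind with
    | _ x y =>
      rw [Sym2.map_pair_eq]
      refine Set.mem_iUnion.1 (hHsub ?_)
      exact (by simpa using he : H.Adj x.1 y.1)
  choose! col hcol using hexcol
  set U : Set (Fin k) := {i : Fin k | ∃ e ∈ M i, ∀ x ∈ e, H.Reachable x w₀} with hUdef
  have hmapsU : ∀ e ∈ (H.induce S).edgeSet, col e ∈ U := by
    intro e he
    refine ⟨Sym2.map Subtype.val e, hcol e he, ?_⟩
    intro x hx
    obtain ⟨x', _, rfl⟩ := Sym2.mem_map.1 hx
    exact x'.2
  have hinjU : Set.InjOn col (H.induce S).edgeSet := by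
    intro e he f hf hef
    have h1 := hcol e he
    have h2 := hcol f hf
    rw [hef] at h1
    have hep : ∀ x ∈ Sym2.map (Subtype.val : S → V) e, H.Reachable x w₀ := by
      intro x hx
      obtain ⟨x', _, rfl⟩ := Sym2.mem_map.1 hx
      exact x'.2
    have hfp : ∀ x ∈ Sym2.map (Subtype.val : S → V) f, H.Reachable x w₀ := by
      intro x hx
      obtain ⟨x', _, rfl⟩ := Sym2.mem_map.1 hx
      exact x'.2
    have := hcolorful (col f) _ h1 _ h2 hep hfp
    exact Sym2.map.injective Subtype.val_injective this
  have hU : (H.induce S).edgeSet.ncard ≤ U.ncard :=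
    Set.ncard_le_ncard_of_injOn col hmapsU hinjU (Set.toFinite _)
  -- blocked colors
  set B : Set (Fin k) := {i : Fin k | ∃ u, H.Reachable u w₀ ∧ s(v, u) ∈ F i} with hBdef
  have hBchoice : ∀ i ∈ B, ∃ u, H.Reachable u w₀ ∧ s(v, u) ∈ F i := fun i hi => hi
  haveI : Nonempty V := ⟨w₀⟩
  choose! g hg1 hg2 using hBchoice
  have hmapsB : ∀ i ∈ B, g i ∈ S \ {v} := by
    intro i hi
    refine ⟨hg1 i hi, ?_⟩
    intro hgv
    simp only [Set.mem_singleton_iff] at hgv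
    have h := hg2 i hi
    rw [hgv] at h
    exact G.loopless.irrefl v (G.mem_edgeSet.1 (hFsub i h))
  have hinjB : Set.InjOn g B := by
    intro i hi j hj hij
    by_contra hne'
    have h1 := hg2 i hi
    have h2 := hg2 j hj
    rw [hij] at h1
    exact Set.disjoint_left.1 (hFdisj hne') h1 h2
  have hB : B.ncard ≤ (S \ {v}).ncard :=
    Set.ncard_le_ncard_of_injOn g hmapsB hinjB (Set.toFinite _)
  have hSv : (S \ {v}).ncard = S.ncard - 1 :=
    Set.ncard_diff_singleton_of_mem hvS
  have hSpos : 0 < S.ncard := (Set.ncard_pos (Set.toFinite _)).2 ⟨v, hvS⟩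
  -- conclude
  have hUB : ¬ U ⊆ B := by
    intro h
    have := Set.ncard_le_ncard h (Set.toFinite _)
    omega
  obtain ⟨i, hiU, hiB⟩ := Set.not_subset.1 hUB
  refine ⟨i, hiU, ?_⟩
  intro x hx hxF
  exact hiB ⟨x, hx, hxF⟩
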